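/- Let k ≥ 3 be an integer and let K be a subfield of ℂ. Then the binary form p_{2k−1}(x,y) = C(2k−1,k) x^{k−1} y^{k−1} (x − y) satisfies L_K(p_{2k−1}) = k if and only if ζ_{k+1} ∈ K. -/

import Mathlib

open MvPolynomial

/-- The `K`-rank (length) of a binary form `f` of degree `d` over a subfield `K` of `ℂ`:
the least number of `d`-th powers of linear forms over `K` of which `f` is a
`K`-linear combination (`⊤` if no such representation exists). -/
noncomputable def Lrank (K : Subfield ℂ) (d : ℕ) (f : MvPolynomial (Fin 2) ℂ) : ℕ∞ :=
  sInf { n : ℕ∞ | ∃ r : ℕ, n = (r : ℕ∞) ∧ ∃ lam al be : Fin r → ℂ,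
    (∀ j, lam j ∈ K ∧ al j ∈ K ∧ be j ∈ K) ∧
    f = ∑ j, MvPolynomial.C (lam j) *
      (MvPolynomial.C (al j) * X 0 + MvPolynomial.C (be j) * X 1) ^ d }

/-- `zeta d = e^(2πi/d)`, the primitive `d`-th root of unity. -/
noncomputable def zeta (d : ℕ) : ℂ :=
  Complex.exp (2 * Real.pi * Complex.I / d)

/-! ### Auxiliary material -/

open Finset

noncomputable section AuxDefs

/-- monomial exponent vector for `x^a y^b` -/
def mu (a b : ℕ) : Fin 2 →₀ ℕ := Finsupp.single 0 a + Finsupp.single 1 b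

/-- the coefficient pattern of `x^(k-1) y^(k-1) (x - y)` (indexed by the power of `x`),
normalized by the binomial coefficient -/
def E (k m : ℕ) : ℂ := if m = k then 1 else if m = k - 1 then -1 else 0

end AuxDefs

lemma mu_eq_iff {a b a' b' : ℕ} : mu a b = mu a' b' ↔ a = a' ∧ b = b' := by
  constructor
  · intro h
    have h0 := DFunLike.congr_fun h (0 : Fin 2)
    have h1 := DFunLike.congr_fun h (1 : Fin 2)
    simp [mu, Finsupp.single_apply] at h0 h1
    exact ⟨h0, h1⟩
  · rintro ⟨rfl, rfl⟩; rfl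

lemma coeff_X_pow_mul (a b i j : ℕ) :
    coeff (mu a b) ((X 0 : MvPolynomial (Fin 2) ℂ) ^ i * X 1 ^ j)
      = if a = i ∧ b = j then 1 else 0 := by
  rw [X_pow_eq_monomial, X_pow_eq_monomial, monomial_mul, coeff_monomial]
  have : ((Finsupp.single (0:Fin 2) i + Finsupp.single 1 j) = mu a b) ↔ (a = i ∧ b = j) := by
    rw [show (Finsupp.single (0:Fin 2) i + Finsupp.single 1 j) = mu i j from rfl, mu_eq_iff]
    constructor <;> (rintro ⟨h1, h2⟩; exact ⟨h1.symm, h2.symm⟩)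
  simp [this, mul_one]

lemma pow_linear (a b : ℂ) (d : ℕ) :
    (C a * X 0 + C b * X 1 : MvPolynomial (Fin 2) ℂ) ^ d
      = ∑ i ∈ range (d+1), C ((d.choose i : ℂ) * a ^ i * b ^ (d - i)) * (X 0 ^ i * X 1 ^ (d-i)) := by
  rw [add_pow]
  refine Finset.sum_congr rfl fun i hi => ?_
  rw [mul_pow, mul_pow, ← C_pow, ← C_pow, C_mul, C_mul, map_natCast]
  ring

/-- Coefficient extraction: a Waring-type representation of `p_{2k-1}` forces the
weighted power sums of the nodes to match the pattern `E`. -/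
lemma rep_sums {k r : ℕ} (hk : 3 ≤ k) {lam al be : Fin r → ℂ}
    (heq : (C (((2*k-1).choose k : ℕ) : ℂ) * X 0 ^ (k-1) * X 1 ^ (k-1) * (X 0 - X 1)
        : MvPolynomial (Fin 2) ℂ)
      = ∑ t, C (lam t) * (C (al t) * X 0 + C (be t) * X 1) ^ (2*k-1)) :
    ∀ m ≤ 2*k-1, (∑ t, lam t * al t ^ m * be t ^ (2*k-1-m)) = E k m := by
  intro m hm
  set d := 2*k-1 with hd
  have hx0 : (X 0 : MvPolynomial (Fin 2) ℂ) ^ k = X 0 ^ (k-1) * X 0 := by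
    rw [← pow_succ, show k - 1 + 1 = k by omega]
  have hx1 : (X 1 : MvPolynomial (Fin 2) ℂ) ^ k = X 1 ^ (k-1) * X 1 := by
    rw [← pow_succ, show k - 1 + 1 = k by omega]
  have hp : (C (((2*k-1).choose k : ℕ) : ℂ) * X 0 ^ (k-1) * X 1 ^ (k-1) * (X 0 - X 1)
        : MvPolynomial (Fin 2) ℂ)
      = C ((d.choose k : ℕ) : ℂ) * (X 0 ^ k * X 1 ^ (k-1))
        - C ((d.choose k : ℕ) : ℂ) * (X 0 ^ (k-1) * X 1 ^ k) := by
    rw [hx0, hx1]; ring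
  have hco := congrArg (coeff (mu m (d - m))) heq
  rw [hp] at hco
  rw [coeff_sub, coeff_C_mul, coeff_C_mul, coeff_X_pow_mul, coeff_X_pow_mul] at hco
  rw [coeff_sum] at hco
  have hR : ∀ t : Fin r, coeff (mu m (d - m)) (C (lam t) * (C (al t) * X 0 + C (be t) * X 1) ^ d)
      = lam t * ((d.choose m : ℂ) * al t ^ m * be t ^ (d - m)) := by
    intro t
    rw [coeff_C_mul, pow_linear, coeff_sum]
    congr 1
    rw [Finset.sum_eq_single m]
    · rw [coeff_C_mul, coeff_X_pow_mul, if_pos ⟨rfl, rfl⟩, mul_one]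
    · intro i hi hne
      rw [coeff_C_mul, coeff_X_pow_mul, if_neg, mul_zero]
      rintro ⟨h1, -⟩; exact hne h1.symm
    · intro h; exact absurd (Finset.mem_range.2 (by omega)) h
  simp only [hR] at hco
  have hre : ∑ x : Fin r, lam x * ((d.choose m:ℂ) * al x ^ m * be x ^ (d-m))
      = (d.choose m:ℂ) * ∑ x : Fin r, lam x * al x ^ m * be x ^ (d-m) := by
    rw [Finset.mul_sum]; exact Finset.sum_congr rfl (fun x _ => by ring)
  rw [hre] at hco
  have hck : ((d.choose k : ℕ) : ℂ) ≠ 0 :=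
    Nat.cast_ne_zero.2 (Nat.choose_pos (by omega)).ne'
  have hcm : ((d.choose m : ℕ) : ℂ) ≠ 0 :=
    Nat.cast_ne_zero.2 (Nat.choose_pos hm).ne'
  by_cases h1 : m = k
  · subst h1
    rw [if_pos ⟨rfl, by omega⟩, if_neg (by omega), mul_one, mul_zero, sub_zero] at hco
    rw [E, if_pos rfl]
    have h' : ((d.choose m : ℕ):ℂ) * 1 = ((d.choose m:ℕ):ℂ) * ∑ x : Fin r, lam x * al x ^ m * be x ^ (d - m) := by
      rw [mul_one]; exact hco
    exact (mul_left_cancel₀ hcm h').symm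
  · by_cases h2 : m = k - 1
    · have hsymm : d.choose m = d.choose k := by
        rw [h2, show k - 1 = d - k by omega]
        exact Nat.choose_symm (by omega)
      rw [if_neg (by omega), if_pos ⟨h2, by omega⟩, mul_one, mul_zero, zero_sub, hsymm] at hco
      rw [E, if_neg h1, if_pos h2]
      have : ((d.choose k : ℕ):ℂ) * (-1) = ((d.choose k:ℕ):ℂ) * ∑ x : Fin r, lam x * al x ^ m * be x ^ (d - m) := by
        rw [mul_neg, mul_one]; exact hco
      exact (mul_left_cancel₀ hck this).symm
    · rw [if_neg (by omega), if_neg (by omega), mul_zero] at hco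
      rw [E, if_neg h1, if_neg h2]
      have : ((d.choose m : ℕ):ℂ) * 0 = ((d.choose m:ℕ):ℂ) * ∑ x : Fin r, lam x * al x ^ m * be x ^ (d - m) := by
        rw [mul_zero]; simpa using hco
      exact (mul_left_cancel₀ hcm this).symm

lemma indsum (n : ℕ) (Q : ℕ → Prop) [DecidablePred Q] (c : ℕ) (hc : ∀ b, Q b → b = c) :
    (∑ b ∈ Finset.range n, if Q b then (1:ℂ) else 0)
      = if c ∈ Finset.range n ∧ Q c then 1 else 0 := by
  have h : ∀ b ∈ Finset.range n, (if Q b then (1:ℂ) else 0)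
      = if b = c then (if Q c then (1:ℂ) else 0) else 0 := by
    intro b _
    by_cases hb : b = c
    · subst hb; simp
    · rw [if_neg hb, if_neg (fun hq => hb (hc b hq))]
  rw [Finset.sum_congr rfl h, Finset.sum_ite_eq' (Finset.range n) c]
  split_ifs <;> tauto

lemma indsumF (k : ℕ) (Q : ℕ → Prop) [DecidablePred Q] (c : ℕ) (hc : ∀ b, Q b → b = c) :
    (∑ b : Fin k, if Q (b:ℕ) then (1:ℂ) else 0) = if c < k ∧ Q c then 1 else 0 := by
  rw [Fin.sum_univ_eq_sum_range (fun b => if Q b then (1:ℂ) else 0) k,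
    indsum k Q c hc]
  simp [Finset.mem_range]

section matrices
variable {k r : ℕ} (lam al be : Fin r → ℂ)

noncomputable def Amat (k : ℕ) (lam al be : Fin r → ℂ) : Matrix (Fin k) (Fin r) ℂ :=
  Matrix.of fun i t => lam t * al t ^ (i:ℕ) * be t ^ (k - (i:ℕ))
noncomputable def Bmat (k : ℕ) (al be : Fin r → ℂ) : Matrix (Fin r) (Fin k) ℂ :=
  Matrix.of fun t j => al t ^ (j:ℕ) * be t ^ (k - 1 - (j:ℕ))
noncomputable def Mmat (k : ℕ) : Matrix (Fin k) (Fin k) ℂ :=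
  Matrix.of fun i j => E k ((i:ℕ)+(j:ℕ))
noncomputable def Wmat (k : ℕ) : Matrix (Fin k) (Fin k) ℂ :=
  Matrix.of fun i j => if (i:ℕ)+(j:ℕ) < k then -1 else 0

lemma AB_eq (hk : 3 ≤ k)
    (hs : ∀ m ≤ 2*k-1, (∑ t, lam t * al t ^ m * be t ^ (2*k-1-m)) = E k m) :
    Amat k lam al be * Bmat k al be = Mmat k := by
  ext i j
  rw [Matrix.mul_apply]
  have hterm : ∀ t, Amat k lam al be i t * Bmat k al be t j
      = lam t * al t ^ ((i:ℕ)+(j:ℕ)) * be t ^ (2*k-1-((i:ℕ)+(j:ℕ))) := by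
    intro t
    show lam t * al t ^ (i:ℕ) * be t ^ (k - (i:ℕ)) * (al t ^ (j:ℕ) * be t ^ (k - 1 - (j:ℕ))) = _
    rw [show (2*k-1-((i:ℕ)+(j:ℕ))) = (k - (i:ℕ)) + (k - 1 - (j:ℕ)) by omega,
      show ((i:ℕ)+(j:ℕ)) = (i:ℕ) + (j:ℕ) from rfl, pow_add, pow_add]
    ring
  rw [Finset.sum_congr rfl (fun t _ => hterm t)]
  exact hs _ (by omega)

lemma MW_eq (hk : 3 ≤ k) : Mmat k * Wmat k = 1 := by
  ext i j
  rw [Matrix.mul_apply]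
  have hik : (i:ℕ) < k := i.isLt
  have hjk : (j:ℕ) < k := j.isLt
  have hterm : ∀ b : Fin k, Mmat k i b * Wmat k b j
      = (if (i:ℕ)+(b:ℕ) = k - 1 ∧ (b:ℕ)+(j:ℕ) < k then (1:ℂ) else 0)
        - (if (i:ℕ)+(b:ℕ) = k ∧ (b:ℕ)+(j:ℕ) < k then (1:ℂ) else 0) := by
    intro b
    show E k ((i:ℕ)+(b:ℕ)) * (if (b:ℕ)+(j:ℕ) < k then (-1:ℂ) else 0) = _
    rw [E]
    split_ifs <;> (try norm_num) <;> omega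
  rw [Finset.sum_congr rfl (fun b _ => hterm b), Finset.sum_sub_distrib,
    indsumF k (fun b => (i:ℕ)+b = k - 1 ∧ b+(j:ℕ) < k) (k - 1 - (i:ℕ)) (fun b hb => by omega),
    indsumF k (fun b => (i:ℕ)+b = k ∧ b+(j:ℕ) < k) (k - (i:ℕ)) (fun b hb => by omega)]
  simp only [Matrix.one_apply, Fin.ext_iff]
  split_ifs <;> (try norm_num) <;> omega
end matrices

lemma Munit {k : ℕ} (hk : 3 ≤ k) : IsUnit (Mmat k) :=
  isUnit_iff_exists.2 ⟨Wmat k, MW_eq hk, mul_eq_one_comm.1 (MW_eq hk)⟩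

/-- Lower bound: any representation needs at least `k` terms. -/
lemma key_lower {k r : ℕ} (hk : 3 ≤ k) {lam al be : Fin r → ℂ}
    (hs : ∀ m ≤ 2*k-1, (∑ t, lam t * al t ^ m * be t ^ (2*k-1-m)) = E k m) :
    k ≤ r := by
  have h1 : (Mmat k).rank = k := by
    rw [Matrix.rank_of_isUnit _ (Munit hk), Fintype.card_fin]
  have h2 : (Mmat k).rank ≤ r := by
    rw [← AB_eq lam al be hk hs]
    exact le_trans (Matrix.rank_mul_le_left _ _) (Matrix.rank_le_width _)
  omega

/-- A representation with exactly `k` terms forces the nodes to be the nontrivial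
`(k+1)`-st roots of unity; in particular `ζ_{k+1}` lies in `K`. -/
lemma key_exact {k : ℕ} (hk : 3 ≤ k) {lam al be : Fin k → ℂ}
    (hs : ∀ m ≤ 2*k-1, (∑ t, lam t * al t ^ m * be t ^ (2*k-1-m)) = E k m)
    (K : Subfield ℂ) (hmem : ∀ t, lam t ∈ K ∧ al t ∈ K ∧ be t ∈ K) :
    zeta (k+1) ∈ K := by
  set A := Amat k lam al be with hA
  set B := Bmat k al be with hB
  have hAB := AB_eq lam al be hk hs
  have hMdet : IsUnit ((Mmat k).det) := (Matrix.isUnit_iff_isUnit_det _).1 (Munit hk)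
  rw [← hAB, Matrix.det_mul] at hMdet
  have hdetA : A.det ≠ 0 := fun h => by simp [← hA, ← hB, h] at hMdet
  have hdetB : B.det ≠ 0 := fun h => by simp [← hA, ← hB, h] at hMdet
  have hlam : ∀ t, lam t ≠ 0 := by
    intro t ht
    refine hdetA (Matrix.det_eq_zero_of_column_eq_zero t (fun i => ?_))
    show lam t * al t ^ (i:ℕ) * be t ^ (k - (i:ℕ)) = 0
    rw [ht]; ring
  have hgs : ∀ t, (∑ i ∈ Finset.range (k+1), al t ^ i * be t ^ (k - i)) = 0 := by
    have hvB : Matrix.vecMul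
        (fun t => lam t * (∑ i ∈ Finset.range (k+1), al t ^ i * be t ^ (k - i))) B = 0 := by
      funext m
      rw [Matrix.vecMul, dotProduct]
      have hterm : ∀ t, (lam t * (∑ i ∈ Finset.range (k+1), al t ^ i * be t ^ (k - i))) * B t m
          = ∑ i ∈ Finset.range (k+1), lam t * al t ^ ((m:ℕ)+i) * be t ^ (2*k-1-((m:ℕ)+i)) := by
        intro t
        rw [Finset.mul_sum, Finset.sum_mul]
        refine Finset.sum_congr rfl fun i hi => ?_
        have hi' : i ≤ k := by simpa using Nat.lt_succ_iff.mp (Finset.mem_range.mp hi)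
        show lam t * (al t ^ i * be t ^ (k - i)) * (al t ^ (m:ℕ) * be t ^ (k - 1 - (m:ℕ))) = _
        rw [show (m:ℕ)+i = (m:ℕ)+i from rfl,
          show 2*k-1-((m:ℕ)+i) = (k - i) + (k - 1 - (m:ℕ)) by
            have := m.isLt; omega,
          pow_add, pow_add]
        ring
      rw [Finset.sum_congr rfl (fun t _ => hterm t), Finset.sum_comm]
      have hinner : ∀ i ∈ Finset.range (k+1),
          (∑ t, lam t * al t ^ ((m:ℕ)+i) * be t ^ (2*k-1-((m:ℕ)+i))) = E k ((m:ℕ)+i) := by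
        intro i hi
        exact hs _ (by have := m.isLt; have := Finset.mem_range.mp hi; omega)
      rw [Finset.sum_congr rfl hinner]
      have hm := m.isLt
      have hsplit : ∀ i ∈ Finset.range (k+1), E k ((m:ℕ)+i)
          = (if (m:ℕ)+i = k then (1:ℂ) else 0) - (if (m:ℕ)+i = k - 1 then (1:ℂ) else 0) := by
        intro i hi
        rw [E]; split_ifs <;> (try norm_num) <;> omega
      rw [Finset.sum_congr rfl hsplit, Finset.sum_sub_distrib,
        indsum (k+1) (fun i => (m:ℕ)+i = k) (k - (m:ℕ)) (fun b hb => by omega),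
        indsum (k+1) (fun i => (m:ℕ)+i = k - 1) (k - 1 - (m:ℕ)) (fun b hb => by omega)]
      rw [if_pos ⟨Finset.mem_range.2 (by omega), by omega⟩,
          if_pos ⟨Finset.mem_range.2 (by omega), by omega⟩]
      simp
    have hc0 : (fun t => lam t * (∑ i ∈ Finset.range (k+1), al t ^ i * be t ^ (k - i))) = 0 := by
      have h1 : IsUnit B.det := isUnit_iff_ne_zero.2 hdetB
      calc (fun t => lam t * (∑ i ∈ Finset.range (k+1), al t ^ i * be t ^ (k - i)))
          = Matrix.vecMul (fun t => lam t * (∑ i ∈ Finset.range (k+1), al t ^ i * be t ^ (k - i))) 1 := (Matrix.vecMul_one _).symm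
        _ = Matrix.vecMul (fun t => lam t * (∑ i ∈ Finset.range (k+1), al t ^ i * be t ^ (k - i))) (B * B⁻¹) := by rw [Matrix.mul_nonsing_inv B h1]
        _ = Matrix.vecMul (Matrix.vecMul (fun t => lam t * (∑ i ∈ Finset.range (k+1), al t ^ i * be t ^ (k - i))) B) B⁻¹ := (Matrix.vecMul_vecMul _ _ _).symm
        _ = Matrix.vecMul 0 B⁻¹ := by rw [hvB]
        _ = 0 := Matrix.zero_vecMul _
    intro t
    have := congrFun hc0 t
    simp only [Pi.zero_apply] at this
    rcases mul_eq_zero.1 this with h | h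
    · exact absurd h (hlam t)
    · exact h
  have hrowB : ∀ t, al t = 0 → be t = 0 → False := by
    intro t ha hb
    refine hdetB (Matrix.det_eq_zero_of_row_eq_zero t (fun j => ?_))
    show al t ^ (j:ℕ) * be t ^ (k - 1 - (j:ℕ)) = 0
    by_cases hj : (j:ℕ) = 0
    · rw [hb, hj, zero_pow (by omega)]; ring
    · rw [ha, zero_pow hj]; ring
  have hal : ∀ t, al t ≠ 0 := by
    intro t ha
    have h0 := hgs t
    rw [Finset.sum_eq_single 0 (fun i hi hne => by rw [ha, zero_pow hne]; ring)
      (fun h => absurd (Finset.mem_range.2 (by omega)) h)] at h0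
    simp only [pow_zero, Nat.sub_zero, one_mul] at h0
    exact hrowB t ha (pow_eq_zero_iff (by omega) |>.1 h0)
  set γ : Fin k → ℂ := fun t => be t * (al t)⁻¹ with hγ
  have hbe : ∀ t, be t = γ t * al t := fun t => (inv_mul_cancel_right₀ (hal t) (be t)).symm
  have hgeom : ∀ t, (∑ i ∈ Finset.range (k+1), γ t ^ i) = 0 := by
    intro t
    have h0 := hgs t
    have h1 : ∀ i ∈ Finset.range (k+1), al t ^ i * be t ^ (k - i)
        = al t ^ k * γ t ^ (k - i) := by
      intro i hi
      rw [hbe t, mul_pow, show al t ^ k = al t ^ i * al t ^ (k-i) by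
        rw [← pow_add, Nat.add_sub_cancel' (by simpa using Nat.lt_succ_iff.mp (Finset.mem_range.mp hi))]]
      ring
    rw [Finset.sum_congr rfl h1, ← Finset.mul_sum] at h0
    have h2 := (mul_eq_zero.1 h0).resolve_left (pow_ne_zero k (hal t))
    have h3 := Finset.sum_range_reflect (fun i => γ t ^ i) (k+1)
    simp only [Nat.add_sub_cancel] at h3
    rw [← h3]
    exact h2
  have hpow : ∀ t, γ t ^ (k+1) = 1 := by
    intro t
    have h1 := geom_sum_mul (γ t) (k+1)
    rw [hgeom t, zero_mul] at h1
    exact sub_eq_zero.mp h1.symm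
  have hne1 : ∀ t, γ t ≠ 1 := by
    intro t h1
    have h2 := hgeom t
    rw [Finset.sum_congr rfl (fun i _ => by rw [h1, one_pow])] at h2
    simp only [Finset.sum_const, Finset.card_range, nsmul_eq_mul, mul_one] at h2
    exact absurd h2 (by exact_mod_cast Nat.succ_ne_zero k)
  have hinj : Function.Injective γ := by
    intro s t hst
    by_contra hne
    have hrw : ∀ j : Fin k, B s j = al s ^ (k-1) * γ s ^ (k - 1 - (j:ℕ)) := by
      intro j
      show al s ^ (j:ℕ) * be s ^ (k - 1 - (j:ℕ)) = _
      rw [hbe s, mul_pow, show al s ^ (k-1) = al s ^ (j:ℕ) * al s ^ (k-1-(j:ℕ)) by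
        rw [← pow_add, Nat.add_sub_cancel' (by have := j.isLt; omega)]]
      ring
    have hrwt : ∀ j : Fin k, B t j = al t ^ (k-1) * γ t ^ (k - 1 - (j:ℕ)) := by
      intro j
      show al t ^ (j:ℕ) * be t ^ (k - 1 - (j:ℕ)) = _
      rw [hbe t, mul_pow, show al t ^ (k-1) = al t ^ (j:ℕ) * al t ^ (k-1-(j:ℕ)) by
        rw [← pow_add, Nat.add_sub_cancel' (by have := j.isLt; omega)]]
      ring
    have hdet0 : B.det = 0 := by
      have hupd := Matrix.det_updateRow_add_smul_self B hne
        (-(al s ^ (k-1) * (al t ^ (k-1))⁻¹))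
      rw [← hupd]
      refine Matrix.det_eq_zero_of_row_eq_zero s ?_
      intro j
      rw [Matrix.updateRow_self]
      show B s j + (-(al s ^ (k-1) * (al t ^ (k-1))⁻¹)) • B t j = 0
      rw [hrw j, hrwt j, hst, smul_eq_mul]
      have hat : al t ^ (k-1) ≠ 0 := pow_ne_zero _ (hal t)
      field_simp
      ring
    exact hdetB hdet0
  have hk1 : (k+1 : ℕ) ≠ 0 := by omega
  have hζ : IsPrimitiveRoot (zeta (k+1)) (k+1) := by
    unfold zeta
    exact_mod_cast Complex.isPrimitiveRoot_exp (k+1) hk1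
  set T : Finset ℂ := (Finset.range (k+1)).image (fun j => zeta (k+1) ^ j) with hT
  have hcardT : T.card = k+1 := by
    rw [hT, Finset.card_image_of_injOn, Finset.card_range]
    intro a ha b hb hab
    exact hζ.pow_inj (Finset.mem_range.1 (by simpa using ha)) (Finset.mem_range.1 (by simpa using hb)) hab
  have h1T : (1:ℂ) ∈ T := Finset.mem_image.2 ⟨0, Finset.mem_range.2 (by omega), pow_zero _⟩
  have hγT : ∀ t, γ t ∈ T.erase 1 := by
    intro t
    haveI : NeZero (k+1) := ⟨hk1⟩
    obtain ⟨i, hi, hpi⟩ := hζ.eq_pow_of_pow_eq_one (hpow t)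
    exact Finset.mem_erase.2 ⟨hne1 t, Finset.mem_image.2 ⟨i, Finset.mem_range.2 hi, hpi⟩⟩
  have hSsub : (Finset.univ.image γ) ⊆ T.erase 1 := by
    intro z hz
    obtain ⟨t, -, rfl⟩ := Finset.mem_image.1 hz
    exact hγT t
  have hScard : (Finset.univ.image γ).card = k := by
    rw [Finset.card_image_of_injective _ hinj, Finset.card_univ, Fintype.card_fin]
  have hTcard : (T.erase 1).card = k := by
    rw [Finset.card_erase_of_mem h1T, hcardT]
    omega
  have hSeq : (Finset.univ.image γ) = T.erase 1 :=
    Finset.eq_of_subset_of_card_le hSsub (by omega)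
  have hζmem : zeta (k+1) ∈ T.erase 1 :=
    Finset.mem_erase.2 ⟨hζ.ne_one (by omega),
      Finset.mem_image.2 ⟨1, Finset.mem_range.2 (by omega), pow_one _⟩⟩
  rw [← hSeq] at hζmem
  obtain ⟨t, -, hts⟩ := Finset.mem_image.1 hζmem
  rw [← hts]
  exact K.mul_mem (hmem t).2.2 (K.inv_mem (hmem t).2.1)

lemma rootsum {k : ℕ} (hk : 3 ≤ k) (q : ℕ) :
    (∑ j ∈ range (k+1), (zeta (k+1) ^ q) ^ j)
      = if (k+1) ∣ q then ((k+1:ℕ):ℂ) else 0 := by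
  have hζ : IsPrimitiveRoot (zeta (k+1)) (k+1) := by
    unfold zeta
    exact_mod_cast Complex.isPrimitiveRoot_exp (k+1) (by omega)
  by_cases hd : (k+1) ∣ q
  · rw [if_pos hd]
    have h1 : zeta (k+1) ^ q = 1 := (hζ.pow_eq_one_iff_dvd q).2 hd
    rw [Finset.sum_congr rfl (fun j _ => by rw [h1, one_pow])]
    simp
  · rw [if_neg hd]
    have hne : zeta (k+1) ^ q ≠ 1 := fun h => hd ((hζ.pow_eq_one_iff_dvd q).1 h)
    have h1 : (zeta (k+1) ^ q) ^ (k+1) = 1 := by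
      rw [← pow_mul, mul_comm, pow_mul, hζ.pow_eq_one, one_pow]
    have h2 := geom_sum_mul (zeta (k+1) ^ q) (k+1)
    rw [h1, sub_self] at h2
    exact (mul_eq_zero.1 h2).resolve_right (sub_ne_zero.2 hne)

lemma wsum {k : ℕ} (hk : 3 ≤ k) (q : ℕ) :
    (∑ j : Fin k, (zeta (k+1) ^ ((j:ℕ)+1)) ^ q)
      = (if (k+1) ∣ q then ((k+1:ℕ):ℂ) else 0) - 1 := by
  rw [← rootsum hk q]
  have h1 : ∀ j : ℕ, (zeta (k+1) ^ (j+1)) ^ q = (zeta (k+1) ^ q) ^ (j+1) := by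
    intro j; rw [← pow_mul, ← pow_mul, mul_comm]
  rw [Fin.sum_univ_eq_sum_range (fun j => (zeta (k+1) ^ (j+1)) ^ q) k,
    Finset.sum_congr rfl (fun j _ => h1 j)]
  rw [Finset.sum_range_succ' (fun j => (zeta (k+1) ^ q) ^ j) k]
  simp


lemma dvd_window {k q : ℕ} (hq1 : 1 ≤ q) (hq2 : q ≤ 2*k+1) : (k+1) ∣ q ↔ q = k+1 := by
  constructor
  · rintro ⟨c, hc⟩
    match c with
    | 0 => omega
    | 1 => omega
    | (c+2) =>
      have h2 : (k+1)*2 ≤ (k+1)*(c+2) := Nat.mul_le_mul_left _ (by omega)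
      omega
  · rintro rfl; exact dvd_refl _

lemma Ssum {k : ℕ} (hk : 3 ≤ k) (i : ℕ) (hi : i ≤ 2*k-1) :
    (∑ j : Fin k, ((zeta (k+1) ^ (2*((j:ℕ)+1)) - zeta (k+1) ^ ((j:ℕ)+1)) * ((k:ℂ)+1)⁻¹)
        * (zeta (k+1) ^ ((j:ℕ)+1)) ^ (2*k-1-i))
      = E k i := by
  set n := 2*k-1-i with hn
  have hterm : ∀ j : Fin k,
      ((zeta (k+1) ^ (2*((j:ℕ)+1)) - zeta (k+1) ^ ((j:ℕ)+1)) * ((k:ℂ)+1)⁻¹)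
        * (zeta (k+1) ^ ((j:ℕ)+1)) ^ n
      = ((k:ℂ)+1)⁻¹ * ((zeta (k+1) ^ ((j:ℕ)+1)) ^ (n+2) - (zeta (k+1) ^ ((j:ℕ)+1)) ^ (n+1)) := by
    intro j
    have h2 : zeta (k+1) ^ (2*((j:ℕ)+1)) = (zeta (k+1) ^ ((j:ℕ)+1)) ^ 2 := by
      rw [← pow_mul, mul_comm]
    rw [h2]
    ring
  rw [Finset.sum_congr rfl (fun j _ => hterm j), ← Finset.mul_sum, Finset.sum_sub_distrib,
    wsum hk (n+2), wsum hk (n+1)]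
  have hc : ((k+1:ℕ):ℂ) = (k:ℂ)+1 := by push_cast; ring
  have hk1 : ((k:ℂ)+1) ≠ 0 := by
    rw [← hc]; exact Nat.cast_ne_zero.2 (by omega)
  by_cases h1 : i = k
  · have hd2 : (k+1) ∣ (n+2) := (dvd_window (by omega) (by omega)).2 (by omega)
    have hd1 : ¬ (k+1) ∣ (n+1) := fun h => by
      have := (dvd_window (by omega) (by omega)).1 h; omega
    rw [if_pos hd2, if_neg hd1, hc, E, if_pos h1]
    field_simp
    ring
  · by_cases h2 : i = k-1
    · have hd2 : ¬ (k+1) ∣ (n+2) := fun h => by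
        have := (dvd_window (by omega) (by omega)).1 h; omega
      have hd1 : (k+1) ∣ (n+1) := (dvd_window (by omega) (by omega)).2 (by omega)
      rw [if_neg hd2, if_pos hd1, hc, E, if_neg h1, if_pos h2]
      field_simp
      ring
    · have hd2 : ¬ (k+1) ∣ (n+2) := fun h => by
        have := (dvd_window (by omega) (by omega)).1 h; omega
      have hd1 : ¬ (k+1) ∣ (n+1) := fun h => by
        have := (dvd_window (by omega) (by omega)).1 h; omega
      rw [if_neg hd2, if_neg hd1, E, if_neg h1, if_neg h2]
      ring

lemma construct_id {k : ℕ} (hk : 3 ≤ k) :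
    (C (((2*k-1).choose k : ℕ) : ℂ) * X 0 ^ (k-1) * X 1 ^ (k-1) * (X 0 - X 1)
      : MvPolynomial (Fin 2) ℂ)
    = ∑ j : Fin k, C ((zeta (k+1) ^ (2*((j:ℕ)+1)) - zeta (k+1) ^ ((j:ℕ)+1)) * ((k:ℂ)+1)⁻¹)
        * (C 1 * X 0 + C (zeta (k+1) ^ ((j:ℕ)+1)) * X 1) ^ (2*k-1) := by
  have step1 : ∀ j : Fin k,
      C ((zeta (k+1) ^ (2*((j:ℕ)+1)) - zeta (k+1) ^ ((j:ℕ)+1)) * ((k:ℂ)+1)⁻¹)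
        * (C 1 * X 0 + C (zeta (k+1) ^ ((j:ℕ)+1)) * X 1 : MvPolynomial (Fin 2) ℂ) ^ (2*k-1)
      = ∑ i ∈ range (2*k-1+1),
          C (((zeta (k+1) ^ (2*((j:ℕ)+1)) - zeta (k+1) ^ ((j:ℕ)+1)) * ((k:ℂ)+1)⁻¹)
            * (((2*k-1).choose i : ℂ) * (zeta (k+1) ^ ((j:ℕ)+1)) ^ (2*k-1-i)))
          * ((X 0 : MvPolynomial (Fin 2) ℂ) ^ i * X 1 ^ (2*k-1-i)) := by
    intro j
    rw [pow_linear, Finset.mul_sum]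
    refine Finset.sum_congr rfl fun i hi => ?_
    rw [← mul_assoc, ← C_mul]
    congr 2
    rw [one_pow]
    ring
  rw [Finset.sum_congr rfl (fun j _ => step1 j), Finset.sum_comm]
  have step2 : ∀ i ∈ range (2*k-1+1),
      (∑ j : Fin k,
        C (((zeta (k+1) ^ (2*((j:ℕ)+1)) - zeta (k+1) ^ ((j:ℕ)+1)) * ((k:ℂ)+1)⁻¹)
            * (((2*k-1).choose i : ℂ) * (zeta (k+1) ^ ((j:ℕ)+1)) ^ (2*k-1-i)))
          * ((X 0 : MvPolynomial (Fin 2) ℂ) ^ i * X 1 ^ (2*k-1-i)))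
      = C ((((2*k-1).choose i : ℕ) : ℂ) * E k i) * (X 0 ^ i * X 1 ^ (2*k-1-i)) := by
    intro i hi
    rw [← Finset.sum_mul, ← map_sum (C : ℂ →+* MvPolynomial (Fin 2) ℂ)]
    congr 2
    rw [show (∑ j : Fin k,
          ((zeta (k+1) ^ (2*((j:ℕ)+1)) - zeta (k+1) ^ ((j:ℕ)+1)) * ((k:ℂ)+1)⁻¹)
            * (((2*k-1).choose i : ℂ) * (zeta (k+1) ^ ((j:ℕ)+1)) ^ (2*k-1-i)))
        = (((2*k-1).choose i : ℕ) : ℂ) * ∑ j : Fin k,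
            ((zeta (k+1) ^ (2*((j:ℕ)+1)) - zeta (k+1) ^ ((j:ℕ)+1)) * ((k:ℂ)+1)⁻¹)
              * (zeta (k+1) ^ ((j:ℕ)+1)) ^ (2*k-1-i) by
      rw [Finset.mul_sum]; exact Finset.sum_congr rfl fun j _ => by push_cast; ring]
    congr 1
    exact Ssum hk i (Nat.lt_succ_iff.mp (Finset.mem_range.mp hi))
  rw [Finset.sum_congr rfl step2]
  have step3 : ∀ i ∈ range (2*k-1+1),
      C ((((2*k-1).choose i : ℕ) : ℂ) * E k i) * ((X 0 : MvPolynomial (Fin 2) ℂ) ^ i * X 1 ^ (2*k-1-i))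
      = (if i = k then C ((((2*k-1).choose k : ℕ) : ℂ)) * (X 0 ^ k * X 1 ^ (2*k-1-k)) else 0)
        + (if i = k-1 then
            -(C ((((2*k-1).choose (k-1) : ℕ) : ℂ)) * (X 0 ^ (k-1) * X 1 ^ (2*k-1-(k-1)))) else 0) := by
    intro i hi
    by_cases h1 : i = k
    · subst h1
      rw [if_pos rfl, if_neg (by omega), add_zero, E, if_pos rfl, mul_one]
    · by_cases h2 : i = k-1
      · subst h2
        rw [if_neg h1, if_pos rfl, zero_add, E, if_neg h1, if_pos rfl, mul_neg_one, map_neg,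
          neg_mul]
      · rw [if_neg h1, if_neg h2, add_zero, E, if_neg h1, if_neg h2, mul_zero, map_zero, zero_mul]
  rw [Finset.sum_congr rfl step3, Finset.sum_add_distrib,
    Finset.sum_ite_eq' (range (2*k-1+1)) k, Finset.sum_ite_eq' (range (2*k-1+1)) (k-1),
    if_pos (Finset.mem_range.2 (by omega)), if_pos (Finset.mem_range.2 (by omega))]
  have hsymm : (2*k-1).choose (k-1) = (2*k-1).choose k := by
    rw [show k - 1 = (2*k-1) - k by omega]
    exact Nat.choose_symm (by omega)
  have he1 : 2*k-1 - k = k - 1 := by omega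
  have he2 : 2*k-1 - (k-1) = k := by omega
  rw [hsymm, he1, he2]
  have hx0 : (X 0 : MvPolynomial (Fin 2) ℂ) ^ k = X 0 ^ (k-1) * X 0 := by
    rw [← pow_succ, show k - 1 + 1 = k by omega]
  have hx1 : (X 1 : MvPolynomial (Fin 2) ℂ) ^ k = X 1 ^ (k-1) * X 1 := by
    rw [← pow_succ, show k - 1 + 1 = k by omega]
  rw [hx0, hx1]
  ring

lemma sInf_eq_iff_of_lower {S : Set ℕ∞} {k : ℕ} (hlow : ∀ n ∈ S, (k:ℕ∞) ≤ n) :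
    sInf S = (k:ℕ∞) ↔ (k:ℕ∞) ∈ S := by
  constructor
  · intro h
    by_contra hkS
    have h2 : ∀ n ∈ S, (k:ℕ∞) + 1 ≤ n := by
      intro n hn
      rcases (hlow n hn).lt_or_eq with hlt | heq
      · exact Order.add_one_le_of_lt hlt
      · exact absurd (heq ▸ hn) hkS
    have h3 := le_sInf h2
    rw [h] at h3
    have h4 : ((k+1:ℕ):ℕ∞) ≤ ((k:ℕ):ℕ∞) := by push_cast; exact h3
    have h5 : k + 1 ≤ k := by exact_mod_cast h4
    omega
  · intro h
    exact le_antisymm (sInf_le h) (le_sInf hlow)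

/-- For `k ≥ 3` and a subfield `K ⊆ ℂ`, the form
`p_{2k−1} = C(2k−1,k) x^{k−1} y^{k−1} (x − y)` has `K`-rank `k` iff `ζ_{k+1} ∈ K`. -/
theorem rank_p_odd_eq_iff (k : ℕ) (hk : 3 ≤ k) (K : Subfield ℂ) :
    Lrank K (2 * k - 1)
      (MvPolynomial.C (((2 * k - 1).choose k : ℕ) : ℂ) *
        X 0 ^ (k - 1) * X 1 ^ (k - 1) * (X 0 - X 1)) = (k : ℕ∞)
    ↔ zeta (k + 1) ∈ K := by
  simp only [Lrank]
  have hlow : ∀ n ∈ { n : ℕ∞ | ∃ r : ℕ, n = (r : ℕ∞) ∧ ∃ lam al be : Fin r → ℂ,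
      (∀ j, lam j ∈ K ∧ al j ∈ K ∧ be j ∈ K) ∧
      (MvPolynomial.C (((2 * k - 1).choose k : ℕ) : ℂ) *
        X 0 ^ (k - 1) * X 1 ^ (k - 1) * (X 0 - X 1) : MvPolynomial (Fin 2) ℂ)
        = ∑ j, MvPolynomial.C (lam j) *
      (MvPolynomial.C (al j) * X 0 + MvPolynomial.C (be j) * X 1) ^ (2 * k - 1) },
      (k:ℕ∞) ≤ n := by
    rintro n ⟨r, rfl, lam, al, be, hmem, heq⟩
    exact_mod_cast key_lower hk (rep_sums hk heq)
  rw [sInf_eq_iff_of_lower hlow]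
  constructor
  · rintro ⟨r, hr, lam, al, be, hmem, heq⟩
    obtain rfl : r = k := by exact_mod_cast hr.symm
    exact key_exact hk (rep_sums hk heq) K hmem
  · intro hz
    refine ⟨k, rfl,
      fun j => (zeta (k+1) ^ (2*((j:ℕ)+1)) - zeta (k+1) ^ ((j:ℕ)+1)) * ((k:ℂ)+1)⁻¹,
      fun _ => 1, fun j => zeta (k+1) ^ ((j:ℕ)+1), ?_, ?_⟩
    · intro j
      have hkK : ((k:ℂ)+1) ∈ K := K.add_mem (by exact_mod_cast natCast_mem K k) K.one_mem
      exact ⟨K.mul_mem (K.sub_mem (pow_mem hz _) (pow_mem hz _)) (K.inv_mem hkK),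
        K.one_mem, pow_mem hz _⟩
    · exact construct_id hk
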